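/- arXiv:2102.07648 — 5 statements merged into one kernel-verified Lean document; each statement's English description precedes it below -/
import Mathlib

section
/- For all real numbers s with 0 < s < 1 and exponents ψ ∈ (0,1), ζ = ψ/(2-ψ), one has -s + s^ζ - (1 - s²)^(ψ/2) < 0. -/
theorem stmt0 (s ψ ζ : ℝ) (hs : 0 < s) (hs1 : s < 1)
    (hψ : 0 < ψ) (hψ1 : ψ < 1) (hζ : ζ = ψ / (2 - ψ)) :
    -s + s ^ ζ - (1 - s ^ 2) ^ (ψ / 2) < 0 := by
  have h2ψ : 0 < 2 - ψ := by linarith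
  have hζ0 : 0 < ζ := by rw [hζ]; positivity
  have hζ1 : ζ < 1 := by
    rw [hζ, div_lt_one h2ψ]; linarith
  have hu : 0 < 1 - s ^ 2 := by nlinarith
  have hu1 : 1 - s ^ 2 < 1 := by nlinarith
  -- split s = s^ζ * s^(1-ζ)
  have hsplit : s = s ^ ζ * s ^ (1 - ζ) := by
    rw [← Real.rpow_add hs]
    norm_num
  have h1 : s ^ (2 : ℝ) ≤ s ^ (1 - ζ) :=
    Real.rpow_le_rpow_of_exponent_ge hs hs1.le (by linarith)
  have h2 : s ^ (2 : ℝ) = s ^ 2 := by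
    rw [show (2:ℝ) = ((2:ℕ):ℝ) by norm_num, Real.rpow_natCast]
  rw [h2] at h1
  have hA : 0 < s ^ ζ := Real.rpow_pos_of_pos hs ζ
  have h3 : s ^ ζ - s ≤ s ^ ζ * (1 - s ^ 2) := by
    nlinarith [mul_le_mul_of_nonneg_left h1 hA.le, hsplit]
  have hAlt : s ^ ζ < 1 := Real.rpow_lt_one hs.le hs1 hζ0
  have hC : 0 < (1 - s ^ 2) ^ (1 - ψ / 2) := Real.rpow_pos_of_pos hu _
  have hCle : (1 - s ^ 2) ^ (1 - ψ / 2) ≤ 1 :=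
    Real.rpow_le_one hu.le hu1.le (by linarith)
  have hB : 0 < (1 - s ^ 2) ^ (ψ / 2) := Real.rpow_pos_of_pos hu _
  have hsplit2 : 1 - s ^ 2 = (1 - s ^ 2) ^ (ψ / 2) * (1 - s ^ 2) ^ (1 - ψ / 2) := by
    rw [← Real.rpow_add hu]
    norm_num
  have hAC : s ^ ζ * (1 - s ^ 2) ^ (1 - ψ / 2) < 1 := by
    nlinarith [mul_pos (sub_pos.mpr hAlt) hC]
  have h4 : s ^ ζ * (1 - s ^ 2) < (1 - s ^ 2) ^ (ψ / 2) := by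
    conv_lhs => rw [hsplit2]
    have := mul_lt_mul_of_pos_left hAC hB
    nlinarith [this]
  linarith
end

section
/- Let ψ ∈ (0,1) and ζ = ψ/(2-ψ). Then for all σ ∈ (0,1), σ^(2/ψ) · (1 - σ^(1/ζ - 1))^(2/ψ) < (1 + σ^(1/ζ)) · (1 - σ^(1/ζ)). -/
theorem stmt1 (ψ ζ σ : ℝ) (hψ : 0 < ψ) (hψ1 : ψ < 1) (hζ : ζ = ψ / (2 - ψ))
    (hσ : 0 < σ) (hσ1 : σ < 1) :
    σ ^ (2 / ψ) * (1 - σ ^ (1 / ζ - 1)) ^ (2 / ψ)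
      < (1 + σ ^ (1 / ζ)) * (1 - σ ^ (1 / ζ)) := by
  have h2ψ : (0:ℝ) < 2 - ψ := by linarith
  have hζ1 : 1 / ζ = 2 / ψ - 1 := by
    rw [hζ]; field_simp
  set a := 2 / ψ with ha_def
  have haψ : a = 2 / ψ := rfl
  have ha : 2 < a := by
    rw [haψ, lt_div_iff₀ hψ]; nlinarith
  rw [hζ1]
  have ht1 : σ ^ (a - 1) < σ := by
    calc σ ^ (a - 1) < σ ^ (1:ℝ) :=
          Real.rpow_lt_rpow_of_exponent_gt hσ hσ1 (by linarith)
      _ = σ := Real.rpow_one σ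
  have ht0 : 0 < σ ^ (a - 1) := Real.rpow_pos_of_pos hσ _
  have hs2 : σ ^ (a - 1 - 1) < 1 := Real.rpow_lt_one hσ.le hσ1 (by linarith)
  have hs2' : 0 < σ ^ (a - 1 - 1) := Real.rpow_pos_of_pos hσ _
  have key : σ * σ ^ (a - 1 - 1) = σ ^ (a - 1) := by
    nth_rewrite 1 [← Real.rpow_one σ]
    rw [← Real.rpow_add hσ]
    norm_num
  have hLHS : σ ^ a * (1 - σ ^ (a - 1 - 1)) ^ a = (σ - σ ^ (a - 1)) ^ a := by
    rw [← Real.mul_rpow hσ.le (by linarith)]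
    rw [mul_sub, mul_one, key]
  rw [hLHS]
  have hx0 : 0 < σ - σ ^ (a - 1) := by linarith
  have hx1 : σ - σ ^ (a - 1) < 1 := by linarith
  have hxa : (σ - σ ^ (a - 1)) ^ a < σ - σ ^ (a - 1) := by
    calc (σ - σ ^ (a - 1)) ^ a < (σ - σ ^ (a - 1)) ^ (1:ℝ) :=
          Real.rpow_lt_rpow_of_exponent_gt hx0 hx1 (by linarith)
      _ = _ := Real.rpow_one _
  have ht1' : σ ^ (a - 1) < 1 := lt_trans ht1 hσ1
  nlinarith [mul_pos ht0 (sub_pos.mpr ht1')]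
end

section
/- Let ψ ∈ (0,1), ζ = ψ/(2-ψ), and let (z₁, z₂) ∈ ℝ × ℝ with z₂ ≠ 0. Set ‖z‖ = √(z₁² + z₂²). Then (z₂/‖z‖) · ( z₁/‖z‖ - ⌊z₁/‖z‖⌉^ζ - ⌊z₂/‖z‖⌉^ψ ) < 0, where ⌊x⌉^a := sign(x)·|x|^a. -/
/-- signed power `⌊x⌉^a = sign(x)·|x|^a` -/
noncomputable def spow (x a : ℝ) : ℝ := Real.sign x * |x| ^ a

theorem stmt2 (ψ ζ : ℝ) (hψ : 0 < ψ) (hψ1 : ψ < 1) (hζ : ζ = ψ / (2 - ψ))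
    (z₁ z₂ : ℝ) (hz₂ : z₂ ≠ 0) :
    (z₂ / Real.sqrt (z₁ ^ 2 + z₂ ^ 2)) *
      (z₁ / Real.sqrt (z₁ ^ 2 + z₂ ^ 2)
        - spow (z₁ / Real.sqrt (z₁ ^ 2 + z₂ ^ 2)) ζ
        - spow (z₂ / Real.sqrt (z₁ ^ 2 + z₂ ^ 2)) ψ) < 0 := by
  have hζ0 : 0 < ζ := by rw [hζ]; exact div_pos hψ (by linarith)
  have hζ1 : ζ < 1 := by
    rw [hζ, div_lt_one (by linarith)]; linarith
  have hsumpos : 0 < z₁ ^ 2 + z₂ ^ 2 := by positivity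
  set n := Real.sqrt (z₁ ^ 2 + z₂ ^ 2) with hn
  have hnpos : 0 < n := Real.sqrt_pos.mpr hsumpos
  set a := z₁ / n with ha
  set b := z₂ / n with hbdef
  have hab : a ^ 2 + b ^ 2 = 1 := by
    rw [ha, hbdef, div_pow, div_pow, ← add_div, div_eq_one_iff_eq (by positivity)]
    rw [hn, Real.sq_sqrt hsumpos.le]
  have hb0 : b ≠ 0 := div_ne_zero hz₂ hnpos.ne'
  have habs : 0 < |b| := abs_pos.mpr hb0
  have ha1 : |a| ≤ 1 := by nlinarith [sq_nonneg b, abs_nonneg a, sq_abs a]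
  have hb1 : |b| ≤ 1 := by nlinarith [sq_nonneg a, abs_nonneg b, sq_abs b]
  -- key inequality
  have key : |a| ^ ζ - |a| < |b| ^ ψ := by
    rcases eq_or_lt_of_le (abs_nonneg a) with h0 | h0
    · rw [← h0, Real.zero_rpow hζ0.ne']
      have : 0 < |b| ^ ψ := Real.rpow_pos_of_pos habs ψ
      linarith
    · have hblt1 : |b| < 1 := by nlinarith [sq_abs a, sq_abs b]
      have h1 : |a| ^ ζ ≤ 1 := Real.rpow_le_one (abs_nonneg a) ha1 hζ0.le
      have h2 : |b| ^ (2:ℝ) < |b| ^ ψ :=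
        Real.rpow_lt_rpow_of_exponent_gt habs hblt1 (by linarith)
      have h3 : |b| ^ (2:ℝ) = b ^ 2 := by
        rw [Real.rpow_two, sq_abs]
      nlinarith [sq_abs a]
  -- b * spow b ψ = |b| * |b| ^ ψ
  have hsign : ∀ x : ℝ, x * Real.sign x = |x| := by
    intro x
    rcases lt_trichotomy x 0 with h | h | h
    · rw [Real.sign_of_neg h, abs_of_neg h]; ring
    · simp [h]
    · rw [Real.sign_of_pos h, abs_of_pos h]; ring
  have hsign2 : ∀ x : ℝ, Real.sign x * |x| = x := by
    intro x
    rcases lt_trichotomy x 0 with h | h | h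
    · rw [Real.sign_of_neg h, abs_of_neg h]; ring
    · simp [h]
    · rw [Real.sign_of_pos h, abs_of_pos h]; ring
  have hb_spow : b * spow b ψ = |b| * |b| ^ ψ := by
    rw [spow, show b * (Real.sign b * |b| ^ ψ) = b * Real.sign b * |b| ^ ψ from by ring,
      hsign b]
  -- bound b * (a - spow a ζ)
  have ha_spow : b * (a - spow a ζ) ≤ |b| * (|a| ^ ζ - |a|) := by
    have haζ : |a| ≤ |a| ^ ζ := by
      rcases eq_or_lt_of_le (abs_nonneg a) with h0 | h0
      · rw [← h0, Real.zero_rpow hζ0.ne']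
      · calc |a| = |a| ^ (1:ℝ) := (Real.rpow_one _).symm
          _ ≤ |a| ^ ζ := Real.rpow_le_rpow_of_exponent_ge h0 ha1 hζ1.le
    have h1 : a - spow a ζ = Real.sign a * (|a| - |a| ^ ζ) := by
      rw [spow, mul_sub, hsign2 a]
    calc b * (a - spow a ζ) ≤ |b * (a - spow a ζ)| := le_abs_self _
      _ = |b| * (|Real.sign a| * |(|a| - |a| ^ ζ)|) := by rw [h1, abs_mul, abs_mul]
      _ ≤ |b| * (1 * (|a| ^ ζ - |a|)) := by
          apply mul_le_mul_of_nonneg_left _ (abs_nonneg b)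
          apply mul_le_mul _ _ (abs_nonneg _) zero_le_one
          · rcases lt_trichotomy a 0 with h | h | h
            · simp [Real.sign_of_neg h]
            · simp [h]
            · simp [Real.sign_of_pos h]
          · rw [abs_of_nonpos (by linarith)]; linarith
      _ = |b| * (|a| ^ ζ - |a|) := by ring
  have hfinal : |b| * (|a| ^ ζ - |a|) - |b| * |b| ^ ψ < 0 := by
    have := mul_lt_mul_of_pos_left key habs
    linarith
  calc b * (a - spow a ζ - spow b ψ) = b * (a - spow a ζ) - b * spow b ψ := by ring
    _ ≤ |b| * (|a| ^ ζ - |a|) - |b| * |b| ^ ψ := by rw [hb_spow]; linarith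
    _ < 0 := hfinal
end

section
/- Let C₁, C₂ > 0, λ(x) = C₁e^{-C₂x}, μ ≠ 0, and suppose φ : ℝ₊ → ℝ is C¹ with φ'(t) = 0 for all t ≥ T₀. Let β be the solution of β_t = λ(x)β_x on (0,1)×(0,∞) with β(1,t) = μ⁻¹φ'(t), and let α solve α_t = -λ(x)α_x with α(0,t) = β(0,t). Then α(x,t) = β(x,t) = 0 for all x ∈ [0,1] and all t ≥ T₀ + (2e^{C₂} - 2)/(C₁C₂). -/
theorem stmt12 (C₁ C₂ μ T₀ : ℝ) (hC₁ : 0 < C₁) (hC₂ : 0 < C₂) (hμ : μ ≠ 0)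
    (hT₀ : 0 ≤ T₀)
    (φ : ℝ → ℝ) (hφ : ContDiff ℝ 1 φ) (hφ' : ∀ t ≥ T₀, deriv φ t = 0)
    (β α : ℝ → ℝ → ℝ)
    (hβ : ∀ x ∈ Set.Icc (0:ℝ) 1, ∀ t,
      (Real.exp C₂ - Real.exp (C₂ * x)) / (C₁ * C₂) ≤ t →
      β x t = μ⁻¹ * deriv φ (t + (Real.exp (C₂ * x) - Real.exp C₂) / (C₁ * C₂)))
    (hα : ∀ x ∈ Set.Icc (0:ℝ) 1, ∀ t,
      (Real.exp (C₂ * x) - 1) / (C₁ * C₂) ≤ t →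
      α x t = β 0 (t - (Real.exp (C₂ * x) - 1) / (C₁ * C₂))) :
    ∀ x ∈ Set.Icc (0:ℝ) 1, ∀ t, T₀ + (2 * Real.exp C₂ - 2) / (C₁ * C₂) ≤ t →
      α x t = 0 ∧ β x t = 0 := by
  intro x hx t ht
  have hD : 0 < C₁ * C₂ := mul_pos hC₁ hC₂
  obtain ⟨hx0, hx1⟩ := hx
  have hEx1 : (1:ℝ) ≤ Real.exp (C₂ * x) := Real.one_le_exp (by positivity)
  have hExE : Real.exp (C₂ * x) ≤ Real.exp C₂ :=
    Real.exp_le_exp.mpr (by nlinarith)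
  have hE1 : (1:ℝ) ≤ Real.exp C₂ := Real.one_le_exp hC₂.le
  -- β vanishes once s ≥ T₀ + (e^{C₂} - 1)/(C₁C₂)
  have hβ0 : ∀ y ∈ Set.Icc (0:ℝ) 1, ∀ s,
      T₀ + (Real.exp C₂ - 1) / (C₁ * C₂) ≤ s → β y s = 0 := by
    intro y hy s hs
    obtain ⟨hy0, hy1⟩ := hy
    have hEy1 : (1:ℝ) ≤ Real.exp (C₂ * y) := Real.one_le_exp (by positivity)
    have hEyE : Real.exp (C₂ * y) ≤ Real.exp C₂ :=
      Real.exp_le_exp.mpr (by nlinarith)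
    have h2 : (Real.exp C₂ - Real.exp (C₂ * y)) / (C₁ * C₂) ≤
        (Real.exp C₂ - 1) / (C₁ * C₂) :=
      div_le_div_of_nonneg_right (by nlinarith) hD.le
    have h1 : (Real.exp C₂ - Real.exp (C₂ * y)) / (C₁ * C₂) ≤ s := by
      have hEpos : 0 ≤ (Real.exp C₂ - 1) / (C₁ * C₂) :=
        div_nonneg (by linarith) hD.le
      linarith
    rw [hβ y ⟨hy0, hy1⟩ s h1, hφ' _ ?_, mul_zero]
    have heq : s + (Real.exp (C₂ * y) - Real.exp C₂) / (C₁ * C₂) =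
        s - (Real.exp C₂ - Real.exp (C₂ * y)) / (C₁ * C₂) := by ring
    rw [ge_iff_le, heq, le_sub_iff_add_le]
    linarith
  have hstep : (Real.exp C₂ - 1) / (C₁ * C₂) ≤ (2 * Real.exp C₂ - 2) / (C₁ * C₂) :=
    div_le_div_of_nonneg_right (by nlinarith) hD.le
  refine ⟨?_, hβ0 x ⟨hx0, hx1⟩ t (by linarith)⟩
  have hle : (Real.exp (C₂ * x) - 1) / (C₁ * C₂) ≤ t := by
    have h3 : (Real.exp (C₂ * x) - 1) / (C₁ * C₂) ≤ (2 * Real.exp C₂ - 2) / (C₁ * C₂) :=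
      div_le_div_of_nonneg_right (by nlinarith) hD.le
    linarith
  rw [hα x ⟨hx0, hx1⟩ t hle]
  apply hβ0 0 ⟨le_refl 0, zero_le_one⟩
  have key : (Real.exp (C₂ * x) - 1) / (C₁ * C₂) + (Real.exp C₂ - 1) / (C₁ * C₂)
      ≤ (2 * Real.exp C₂ - 2) / (C₁ * C₂) := by
    rw [← add_div]
    exact div_le_div_of_nonneg_right (by nlinarith) hD.le
  linarith
end

section
/- Let λ(x) = C₁e^{-C₂x} with C₁, C₂ > 0, let λ(x): [0,1] → ℝ, and consider continuous a(x) > 0 for all x. Then the solution (f,g) of the Goursat system from Lemma 1, given by the characteristics formulas f(x,ξ) = e^{-∫₀^{Λ(ξ)} λ'(Λ⁻¹(σ))dσ}·[ g(Λ⁻¹(Λ(x)-Λ(ξ)),0) + ∫₀^{Λ(ξ)} e^{∫₀^σ λ'(Λ⁻¹(τ))dτ} μ(Λ⁻¹(Λ(x)-Λ(ξ)+σ)) g(Λ⁻¹(Λ(x)-Λ(ξ)+σ), Λ⁻¹(σ)) dσ ], satisfies f(x,ξ) > 0 and g(x,ξ) > 0 strictly for all (x,ξ) ∈ 𝒯,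 given that g(x,x) = C > 0 and μ > 0. -/
/-- The triangle 𝒯 = {(x,ξ) : 0 ≤ ξ ≤ x ≤ 1}. -/
def Tri : Set (ℝ × ℝ) := {p | 0 ≤ p.2 ∧ p.2 ≤ p.1 ∧ p.1 ≤ 1}

theorem stmt19 (C₁ C₂ C : ℝ) (hC₁ : 0 < C₁) (hC₂ : 0 < C₂) (hC : 0 < C)
    (lam Λ Λinv mu : ℝ → ℝ)
    (hlam : ∀ x, lam x = C₁ * Real.exp (-C₂ * x))
    (hΛ : ∀ x, Λ x = ∫ s in (0:ℝ)..x, (lam s)⁻¹)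
    (hΛinv : ∀ t, Λinv t = (1 / C₂) * Real.log (1 + C₁ * C₂ * t))
    (hmu : ∀ x, mu x = -(deriv lam x) / 2) (hmupos : ∀ x ∈ Set.Icc (0:ℝ) 1, 0 < mu x)
    (f g : ℝ → ℝ → ℝ)
    (hfc : ContinuousOn (Function.uncurry f) Tri)
    (hgc : ContinuousOn (Function.uncurry g) Tri)
    (hgdiag : ∀ x ∈ Set.Icc (0:ℝ) 1, g x x = C)
    (hfrep : ∀ x ξ : ℝ, (x, ξ) ∈ Tri →
      f x ξ = Real.exp (-(∫ σ in (0:ℝ)..(Λ ξ), deriv lam (Λinv σ))) *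
        (g (Λinv (Λ x - Λ ξ)) 0
          + ∫ σ in (0:ℝ)..(Λ ξ),
              Real.exp (∫ τ in (0:ℝ)..σ, deriv lam (Λinv τ)) *
                mu (Λinv (Λ x - Λ ξ + σ)) *
                g (Λinv (Λ x - Λ ξ + σ)) (Λinv σ)))
    (hgrep : ∀ x ξ : ℝ, (x, ξ) ∈ Tri →
      g x ξ = Real.exp (∫ σ in (0:ℝ)..((Λ x - Λ ξ) / 2),
          deriv lam (Λinv ((Λ x + Λ ξ) / 2 - σ))) *
        (C + ∫ σ in (0:ℝ)..((Λ x - Λ ξ) / 2),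
            Real.exp (-(∫ τ in (0:ℝ)..σ, deriv lam (Λinv ((Λ x + Λ ξ) / 2 - τ)))) *
              mu (Λinv ((Λ x + Λ ξ) / 2 + σ)) *
              f (Λinv ((Λ x + Λ ξ) / 2 + σ)) (Λinv ((Λ x + Λ ξ) / 2 - σ)))) :
    ∀ x ξ : ℝ, (x, ξ) ∈ Tri → 0 < f x ξ ∧ 0 < g x ξ := by

  -- ## Basic facts about Λ and Λinv
  have hCC : (0:ℝ) < C₁ * C₂ := mul_pos hC₁ hC₂
  have hΛeq : ∀ x, Λ x = (Real.exp (C₂ * x) - 1) / (C₁ * C₂) := by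
    intro x
    rw [hΛ]
    have hderiv : ∀ s ∈ Set.uIcc (0:ℝ) x,
        HasDerivAt (fun s => Real.exp (C₂ * s) / (C₁ * C₂)) ((lam s)⁻¹) s := by
      intro s _
      have h1 : HasDerivAt (fun s : ℝ => C₂ * s) C₂ s := by
        simpa using (hasDerivAt_id s).const_mul C₂
      have h2 := (h1.exp).div_const (C₁ * C₂)
      refine h2.congr_deriv ?_
      symm
      rw [hlam, neg_mul, Real.exp_neg]
      field_simp
    have hint : IntervalIntegrable (fun s => (lam s)⁻¹) MeasureTheory.volume 0 x := by
      have : Continuous fun s => (lam s)⁻¹ := by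
        have : (fun s => (lam s)⁻¹) = fun s => (C₁ * Real.exp (-C₂ * s))⁻¹ := by
          funext s; rw [hlam]
        rw [this]
        fun_prop (disch := intro s; positivity)
      exact this.intervalIntegrable 0 x
    rw [intervalIntegral.integral_eq_sub_of_hasDerivAt hderiv hint]
    simp [Real.exp_ne_zero]
    ring
  have hΛ0 : Λ 0 = 0 := by simp [hΛeq]
  have hΛmono : StrictMono Λ := by
    intro a b hab
    rw [hΛeq, hΛeq]
    gcongr
  have hΛcont : Continuous Λ := by
    have : Λ = fun x => (Real.exp (C₂ * x) - 1) / (C₁ * C₂) := funext hΛeq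
    rw [this]; fun_prop
  have hinvΛ : ∀ x, Λinv (Λ x) = x := by
    intro x
    rw [hΛinv, hΛeq]
    have h1 : 1 + C₁ * C₂ * ((Real.exp (C₂ * x) - 1) / (C₁ * C₂)) = Real.exp (C₂ * x) := by
      field_simp
      ring
    rw [h1, Real.log_exp]
    field_simp
  have hΛinvΛ : ∀ t, 0 ≤ t → Λ (Λinv t) = t := by
    intro t ht
    have hpos : (0:ℝ) < 1 + C₁ * C₂ * t := by nlinarith
    rw [hΛeq, hΛinv]
    have : C₂ * (1 / C₂ * Real.log (1 + C₁ * C₂ * t)) = Real.log (1 + C₁ * C₂ * t) := by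
      field_simp
    rw [this, Real.exp_log hpos]
    field_simp
    ring
  have hΛinvmono : ∀ a b : ℝ, 0 ≤ a → a ≤ b → Λinv a ≤ Λinv b := by
    intro a b ha hab
    rw [hΛinv, hΛinv]
    have h1 : (0:ℝ) < 1 + C₁ * C₂ * a := by nlinarith
    have := Real.log_le_log h1 (by nlinarith : 1 + C₁ * C₂ * a ≤ 1 + C₁ * C₂ * b)
    have h2 : (0:ℝ) ≤ 1 / C₂ := by positivity
    nlinarith
  have hΛinv0 : Λinv 0 = 0 := by simp [hΛinv]
  have hmem : ∀ t : ℝ, 0 ≤ t → t ≤ Λ 1 → Λinv t ∈ Set.Icc (0:ℝ) 1 := by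
    intro t ht h1
    constructor
    · rw [← hΛinv0]; exact hΛinvmono 0 t le_rfl ht
    · rw [← hinvΛ 1]; exact hΛinvmono t (Λ 1) ht h1
  have hΛnonneg : ∀ x : ℝ, 0 ≤ x → 0 ≤ Λ x := by
    intro x hx; rw [← hΛ0]; exact hΛmono.monotone hx
  have hΛle1 : ∀ x : ℝ, x ≤ 1 → Λ x ≤ Λ 1 := fun x hx => hΛmono.monotone hx
  -- ## positivity of f on the diagonal
  have hdiagf : ∀ x ∈ Set.Icc (0:ℝ) 1, 0 < f x x := by
    intro x hx
    have hTx : (x, x) ∈ Tri := ⟨hx.1, le_rfl, hx.2⟩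
    rw [hfrep x x hTx]
    simp only [sub_self, zero_add]
    rw [hΛinv0, hgdiag 0 ⟨le_rfl, zero_le_one⟩]
    have hΛx0 : 0 ≤ Λ x := hΛnonneg x hx.1
    have hint : 0 ≤ ∫ σ in (0:ℝ)..(Λ x),
        Real.exp (∫ τ in (0:ℝ)..σ, deriv lam (Λinv τ)) * mu (Λinv σ) * g (Λinv σ) (Λinv σ) := by
      apply intervalIntegral.integral_nonneg hΛx0
      intro σ hσ
      have hσ1 : σ ≤ Λ 1 := hσ.2.trans (hΛle1 x hx.2)
      have hm : Λinv σ ∈ Set.Icc (0:ℝ) 1 := hmem σ hσ.1 hσ1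
      rw [hgdiag _ hm]
      have := hmupos _ hm
      positivity
    have := Real.exp_pos (-(∫ σ in (0:ℝ)..(Λ x), deriv lam (Λinv σ)))
    nlinarith
  -- ## the triangle is compact
  have hTriclosed : IsClosed Tri := by
    have heq : Tri = {p : ℝ × ℝ | 0 ≤ p.2} ∩ {p | p.2 ≤ p.1} ∩ {p | p.1 ≤ 1} := by
      ext p; simp [Tri, and_assoc]
    rw [heq]
    exact ((isClosed_le continuous_const continuous_snd).inter
      (isClosed_le continuous_snd continuous_fst)).inter
      (isClosed_le continuous_fst continuous_const)
  have hTricomp : IsCompact Tri := by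
    apply IsCompact.of_isClosed_subset (isCompact_Icc.prod isCompact_Icc) hTriclosed
    rintro ⟨x, ξ⟩ ⟨h1, h2, h3⟩
    exact ⟨⟨h1.trans h2, h3⟩, h1, h2.trans h3⟩
  -- ## main argument by contradiction
  by_contra hcon
  push_neg at hcon
  obtain ⟨a, b, hab, habn⟩ := hcon
  set Z : Set (ℝ × ℝ) := (Tri ∩ Function.uncurry f ⁻¹' Set.Iic 0) ∪
      (Tri ∩ Function.uncurry g ⁻¹' Set.Iic 0) with hZdef
  have hZTri : Z ⊆ Tri := by
    rintro p (⟨h, _⟩ | ⟨h, _⟩) <;> exact h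
  have hZclosed : IsClosed Z :=
    (hfc.preimage_isClosed_of_isClosed hTriclosed isClosed_Iic).union
      (hgc.preimage_isClosed_of_isClosed hTriclosed isClosed_Iic)
  have hZcomp : IsCompact Z := IsCompact.of_isClosed_subset hTricomp hZclosed hZTri
  have hZne : Z.Nonempty := by
    refine ⟨(a, b), ?_⟩
    rcases le_or_gt (f a b) 0 with h | h
    · exact Or.inl ⟨hab, h⟩
    · exact Or.inr ⟨hab, habn h⟩
  have hdcont : ContinuousOn (fun p : ℝ × ℝ => Λ p.1 - Λ p.2) Z :=
    ((hΛcont.comp continuous_fst).sub (hΛcont.comp continuous_snd)).continuousOn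
  obtain ⟨p0, hp0Z, hmin⟩ := hZcomp.exists_isMinOn hZne hdcont
  obtain ⟨x0, ξ0⟩ := p0
  have hminZ : ∀ q ∈ Z, Λ x0 - Λ ξ0 ≤ Λ q.1 - Λ q.2 := fun q hq => hmin hq
  set t0 : ℝ := Λ x0 - Λ ξ0 with ht0def
  have hp0T : (x0, ξ0) ∈ Tri := hZTri hp0Z
  obtain ⟨hb0, hbx, hb1⟩ := hp0T
  have ht0nn : 0 ≤ t0 := by
    have := hΛmono.monotone hbx; simp only [ht0def]; linarith
  -- every point of the triangle strictly below level t0 has f,g > 0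
  have hnotZ : ∀ x ξ : ℝ, (x, ξ) ∈ Tri → Λ x - Λ ξ < t0 → 0 < f x ξ ∧ 0 < g x ξ := by
    intro x ξ hT hlt
    have hne : (x, ξ) ∉ Z := fun hZ => absurd (hminZ _ hZ) (not_le.2 hlt)
    constructor <;> by_contra h <;> push_neg at h
    · exact hne (Or.inl ⟨hT, h⟩)
    · exact hne (Or.inr ⟨hT, h⟩)
  -- t0 > 0
  have ht0pos : 0 < t0 := by
    rcases lt_or_eq_of_le ht0nn with h | h
    · exact h
    have hxx : x0 = ξ0 := by
      apply hΛmono.injective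
      simp only [ht0def] at h; linarith
    subst hxx
    have hxmem : x0 ∈ Set.Icc (0:ℝ) 1 := ⟨hb0, hb1⟩
    rcases hp0Z with ⟨_, hf⟩ | ⟨_, hg⟩
    · exact absurd (hdiagf x0 hxmem) (not_lt.2 hf)
    · have : g x0 x0 = C := hgdiag x0 hxmem
      rw [Set.mem_preimage, Set.mem_Iic] at hg
      simp only [Function.uncurry] at hg
      rw [this] at hg
      linarith
  -- f, g ≥ 0 on the sublevel set {Λ x - Λ ξ ≤ t0}
  have hK : ∀ x ξ : ℝ, (x, ξ) ∈ Tri → Λ x - Λ ξ ≤ t0 → 0 ≤ f x ξ ∧ 0 ≤ g x ξ := by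
    intro x ξ hT hle
    rcases lt_or_eq_of_le hle with hlt | heq
    · obtain ⟨h1, h2⟩ := hnotZ x ξ hT hlt
      exact ⟨h1.le, h2.le⟩
    obtain ⟨hξ0, hξx, hx1⟩ := hT
    have hξltx : ξ < x := by
      by_contra h
      push_neg at h
      have := hΛmono.monotone h
      nlinarith [ht0pos]
    have hclos : Filter.NeBot (nhdsWithin x (Set.Ioo ξ x)) := by
      apply mem_closure_iff_nhdsWithin_neBot.mp
      rw [closure_Ioo (ne_of_lt hξltx)]
      exact ⟨hξltx.le, le_rfl⟩
    have hmaps : Set.MapsTo (fun u : ℝ => (u, ξ)) (Set.Icc ξ x) Tri := by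
      intro u hu
      exact ⟨hξ0, hu.1, hu.2.trans hx1⟩
    have hev : ∀ᶠ u in nhdsWithin x (Set.Ioo ξ x),
        (0 ≤ f u ξ ∧ 0 ≤ g u ξ) := by
      apply eventually_mem_nhdsWithin.mono
      intro u hu
      have hT' : (u, ξ) ∈ Tri := ⟨hξ0, hu.1.le, hu.2.le.trans hx1⟩
      have hlt : Λ u - Λ ξ < t0 := by
        have := hΛmono hu.2
        linarith [heq]
      obtain ⟨h1, h2⟩ := hnotZ u ξ hT' hlt
      exact ⟨h1.le, h2.le⟩
    have hxm : x ∈ Set.Icc ξ x := ⟨hξltx.le, le_rfl⟩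
    constructor
    · have hFcont : ContinuousOn (fun u => f u ξ) (Set.Icc ξ x) :=
        hfc.comp ((continuous_id.prodMk continuous_const).continuousOn) hmaps
      have htend := (hFcont x hxm).mono Set.Ioo_subset_Icc_self
      exact ge_of_tendsto htend (hev.mono fun u hu => hu.1)
    · have hGcont : ContinuousOn (fun u => g u ξ) (Set.Icc ξ x) :=
        hgc.comp ((continuous_id.prodMk continuous_const).continuousOn) hmaps
      have htend := (hGcont x hxm).mono Set.Ioo_subset_Icc_self
      exact ge_of_tendsto htend (hev.mono fun u hu => hu.2)
  -- g > 0 on the sublevel set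
  have hg : ∀ x ξ : ℝ, (x, ξ) ∈ Tri → Λ x - Λ ξ ≤ t0 → 0 < g x ξ := by
    intro x ξ hT hle
    obtain ⟨hξ0, hξx, hx1⟩ := hT
    have hΛξ0 : 0 ≤ Λ ξ := hΛnonneg ξ hξ0
    have hΛx1 : Λ x ≤ Λ 1 := hΛle1 x hx1
    have hΛξx : Λ ξ ≤ Λ x := hΛmono.monotone hξx
    rw [hgrep x ξ ⟨hξ0, hξx, hx1⟩]
    have hint : 0 ≤ ∫ σ in (0:ℝ)..((Λ x - Λ ξ) / 2),
        Real.exp (-(∫ τ in (0:ℝ)..σ, deriv lam (Λinv ((Λ x + Λ ξ) / 2 - τ)))) *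
          mu (Λinv ((Λ x + Λ ξ) / 2 + σ)) *
          f (Λinv ((Λ x + Λ ξ) / 2 + σ)) (Λinv ((Λ x + Λ ξ) / 2 - σ)) := by
      apply intervalIntegral.integral_nonneg (by linarith)
      intro σ hσ
      obtain ⟨hσ0, hσ2⟩ := hσ
      have hps0 : 0 ≤ (Λ x + Λ ξ) / 2 + σ := by linarith
      have hps1 : (Λ x + Λ ξ) / 2 + σ ≤ Λ 1 := by linarith
      have hms0 : 0 ≤ (Λ x + Λ ξ) / 2 - σ := by linarith
      have hms1 : (Λ x + Λ ξ) / 2 - σ ≤ Λ 1 := by linarith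
      have hxm : Λinv ((Λ x + Λ ξ) / 2 + σ) ∈ Set.Icc (0:ℝ) 1 := hmem _ hps0 hps1
      have hξm : Λinv ((Λ x + Λ ξ) / 2 - σ) ∈ Set.Icc (0:ℝ) 1 := hmem _ hms0 hms1
      have horder : Λinv ((Λ x + Λ ξ) / 2 - σ) ≤ Λinv ((Λ x + Λ ξ) / 2 + σ) :=
        hΛinvmono _ _ hms0 (by linarith)
      have hTq : (Λinv ((Λ x + Λ ξ) / 2 + σ), Λinv ((Λ x + Λ ξ) / 2 - σ)) ∈ Tri :=
        ⟨hξm.1, horder, hxm.2⟩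
      have hdq : Λ (Λinv ((Λ x + Λ ξ) / 2 + σ)) - Λ (Λinv ((Λ x + Λ ξ) / 2 - σ)) ≤ t0 := by
        rw [hΛinvΛ _ hps0, hΛinvΛ _ hms0]
        linarith
      have hfq := (hK _ _ hTq hdq).1
      have hmuq := hmupos _ hxm
      have hexp := Real.exp_pos (-(∫ τ in (0:ℝ)..σ, deriv lam (Λinv ((Λ x + Λ ξ) / 2 - τ))))
      positivity
    have hexp := Real.exp_pos (∫ σ in (0:ℝ)..((Λ x - Λ ξ) / 2),
        deriv lam (Λinv ((Λ x + Λ ξ) / 2 - σ)))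
    nlinarith
  -- f > 0 at the minimum point: contradiction
  have hΛξ00 : 0 ≤ Λ ξ0 := hΛnonneg ξ0 hb0
  have hΛx01 : Λ x0 ≤ Λ 1 := hΛle1 x0 hb1
  have hΛξx0 : Λ ξ0 ≤ Λ x0 := hΛmono.monotone hbx
  have hfpos : 0 < f x0 ξ0 := by
    rw [hfrep x0 ξ0 ⟨hb0, hbx, hb1⟩]
    have hg0 : 0 < g (Λinv (Λ x0 - Λ ξ0)) 0 := by
      have h1 : 0 ≤ Λ x0 - Λ ξ0 := by linarith
      have h2 : Λ x0 - Λ ξ0 ≤ Λ 1 := by linarith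
      have hm := hmem _ h1 h2
      apply hg _ _ ⟨le_rfl, hm.1, hm.2⟩
      rw [hΛinvΛ _ h1, hΛ0]
      simp [ht0def]
    have hint : 0 ≤ ∫ σ in (0:ℝ)..(Λ ξ0),
        Real.exp (∫ τ in (0:ℝ)..σ, deriv lam (Λinv τ)) *
          mu (Λinv (Λ x0 - Λ ξ0 + σ)) *
          g (Λinv (Λ x0 - Λ ξ0 + σ)) (Λinv σ) := by
      apply intervalIntegral.integral_nonneg hΛξ00
      intro σ hσ
      obtain ⟨hσ0, hσ2⟩ := hσ
      have hps0 : 0 ≤ Λ x0 - Λ ξ0 + σ := by linarith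
      have hps1 : Λ x0 - Λ ξ0 + σ ≤ Λ 1 := by linarith
      have hxm : Λinv (Λ x0 - Λ ξ0 + σ) ∈ Set.Icc (0:ℝ) 1 := hmem _ hps0 hps1
      have hξm : Λinv σ ∈ Set.Icc (0:ℝ) 1 := hmem _ hσ0 (by linarith)
      have horder : Λinv σ ≤ Λinv (Λ x0 - Λ ξ0 + σ) :=
        hΛinvmono _ _ hσ0 (by linarith)
      have hTq : (Λinv (Λ x0 - Λ ξ0 + σ), Λinv σ) ∈ Tri := ⟨hξm.1, horder, hxm.2⟩
      have hdq : Λ (Λinv (Λ x0 - Λ ξ0 + σ)) - Λ (Λinv σ) ≤ t0 := by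
        rw [hΛinvΛ _ hps0, hΛinvΛ _ hσ0]
        simp [ht0def]
      have hgq := (hg _ _ hTq hdq).le
      have hmuq := hmupos _ hxm
      have hexp := Real.exp_pos (∫ τ in (0:ℝ)..σ, deriv lam (Λinv τ))
      positivity
    have hexp := Real.exp_pos (-(∫ σ in (0:ℝ)..(Λ ξ0), deriv lam (Λinv σ)))
    nlinarith
  have hgpos : 0 < g x0 ξ0 := hg x0 ξ0 ⟨hb0, hbx, hb1⟩ le_rfl
  rcases hp0Z with ⟨_, hf⟩ | ⟨_, hgle⟩
  · exact absurd hfpos (not_lt.2 hf)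
  · exact absurd hgpos (not_lt.2 hgle)
end
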